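/- For square matrices A (m×m) and B (p×p) over ℝ, the spectral norm satisfies ‖A ⊗ I_p + I_m ⊗ B‖ ≤ ‖A‖ + ‖B‖, and if A and B are symmetric entrywise-nonnegative matrices then ‖A ⊗ I_p + I_m ⊗ B‖ = ‖A‖ + ‖B‖. -/

import Mathlib

open Matrix Kronecker
open scoped RealInnerProductSpace

/-- The spectral (operator) norm of a real square matrix, i.e. the operator norm of the
induced linear map on Euclidean space. -/
noncomputable def specNorm {n : Type*} [Fintype n] [DecidableEq n] (M : Matrix n n ℝ) : ℝ :=
  ‖Matrix.toEuclideanCLM (𝕜 := ℝ) M‖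

namespace SpecAux

variable {n : Type*} [Fintype n] [DecidableEq n]

lemma apply_CLM (M : Matrix n n ℝ) (x : EuclideanSpace ℝ n) (i : n) :
    (Matrix.toEuclideanCLM (𝕜 := ℝ) M x) i = ∑ j, M i j * x j := rfl

lemma inner_sum' (x y : EuclideanSpace ℝ n) : ⟪x, y⟫ = ∑ i, x i * y i := by
  simp [PiLp.inner_apply, mul_comm]

lemma normsq (x : EuclideanSpace ℝ n) : ‖x‖ ^ 2 = ∑ i, (x i) ^ 2 := by
  rw [← real_inner_self_eq_norm_sq, PiLp.inner_apply]
  simp [sq]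

lemma inner_CLM (M : Matrix n n ℝ) (x y : EuclideanSpace ℝ n) :
    ⟪Matrix.toEuclideanCLM (𝕜 := ℝ) M x, y⟫ = ∑ i, ∑ j, M i j * x j * y i := by
  rw [inner_sum']
  simp_rw [apply_CLM, Finset.sum_mul]

lemma le_opNorm_mul (M : Matrix n n ℝ) (x : EuclideanSpace ℝ n) :
    ‖Matrix.toEuclideanCLM (𝕜 := ℝ) M x‖ ≤ specNorm M * ‖x‖ :=
  (Matrix.toEuclideanCLM (𝕜 := ℝ) M).le_opNorm x

variable {m p : Type*} [Fintype m] [DecidableEq m] [Fintype p] [DecidableEq p]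

lemma kron_one_apply (A : Matrix m m ℝ) (x : EuclideanSpace ℝ (m × p)) (i : m) (k : p) :
    (Matrix.toEuclideanCLM (𝕜 := ℝ) (A ⊗ₖ (1 : Matrix p p ℝ)) x) (i, k)
      = ∑ j, A i j * x (j, k) := by
  rw [apply_CLM, Fintype.sum_prod_type]
  simp [Matrix.one_apply, mul_ite, ite_mul]

lemma one_kron_apply (B : Matrix p p ℝ) (x : EuclideanSpace ℝ (m × p)) (i : m) (k : p) :
    (Matrix.toEuclideanCLM (𝕜 := ℝ) ((1 : Matrix m m ℝ) ⊗ₖ B) x) (i, k)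
      = ∑ l, B k l * x (i, l) := by
  rw [apply_CLM, Fintype.sum_prod_type]
  simp [Matrix.one_apply, mul_ite, ite_mul]

lemma specNorm_kron_one_le (A : Matrix m m ℝ) :
    specNorm (A ⊗ₖ (1 : Matrix p p ℝ)) ≤ specNorm A := by
  apply ContinuousLinearMap.opNorm_le_bound _ (norm_nonneg _)
  intro x
  have key : ‖Matrix.toEuclideanCLM (𝕜 := ℝ) (A ⊗ₖ (1 : Matrix p p ℝ)) x‖ ^ 2
      ≤ (specNorm A * ‖x‖) ^ 2 := by
    have hk : ∀ k : p, ∑ i, (∑ j, A i j * x (j, k)) ^ 2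
        ≤ specNorm A ^ 2 * ∑ j, (x (j, k)) ^ 2 := by
      intro k
      set xk : EuclideanSpace ℝ m := (WithLp.equiv 2 (m → ℝ)).symm (fun j => x (j, k)) with hxk
      have h1 : ∑ i, (∑ j, A i j * x (j, k)) ^ 2
          = ‖Matrix.toEuclideanCLM (𝕜 := ℝ) A xk‖ ^ 2 := by
        rw [normsq]
        simp [apply_CLM, hxk, Matrix.mulVec, dotProduct]
      have h2 : ‖Matrix.toEuclideanCLM (𝕜 := ℝ) A xk‖ ≤ specNorm A * ‖xk‖ :=
        le_opNorm_mul A xk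
      have h3 : ‖xk‖ ^ 2 = ∑ j, (x (j, k)) ^ 2 := by rw [normsq]; rfl
      calc ∑ i, (∑ j, A i j * x (j, k)) ^ 2
          = ‖Matrix.toEuclideanCLM (𝕜 := ℝ) A xk‖ ^ 2 := h1
        _ ≤ (specNorm A * ‖xk‖) ^ 2 := by
            apply pow_le_pow_left₀ (norm_nonneg _) h2
        _ = specNorm A ^ 2 * ∑ j, (x (j, k)) ^ 2 := by rw [mul_pow, h3]
    calc ‖Matrix.toEuclideanCLM (𝕜 := ℝ) (A ⊗ₖ (1 : Matrix p p ℝ)) x‖ ^ 2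
        = ∑ k, ∑ i, (∑ j, A i j * x (j, k)) ^ 2 := by
          rw [normsq, Fintype.sum_prod_type, Finset.sum_comm]
          simp_rw [kron_one_apply]
      _ ≤ ∑ k : p, specNorm A ^ 2 * ∑ j, (x (j, k)) ^ 2 :=
          Finset.sum_le_sum fun k _ => hk k
      _ = (specNorm A * ‖x‖) ^ 2 := by
          rw [← Finset.mul_sum, mul_pow, normsq, Fintype.sum_prod_type, Finset.sum_comm]
  simp only [specNorm] at key
  nlinarith [norm_nonneg (Matrix.toEuclideanCLM (𝕜 := ℝ) (A ⊗ₖ (1 : Matrix p p ℝ)) x),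
    mul_nonneg (norm_nonneg (Matrix.toEuclideanCLM (𝕜 := ℝ) A)) (norm_nonneg x)]

lemma specNorm_one_kron_le (B : Matrix p p ℝ) :
    specNorm ((1 : Matrix m m ℝ) ⊗ₖ B) ≤ specNorm B := by
  apply ContinuousLinearMap.opNorm_le_bound _ (norm_nonneg _)
  intro x
  have key : ‖Matrix.toEuclideanCLM (𝕜 := ℝ) ((1 : Matrix m m ℝ) ⊗ₖ B) x‖ ^ 2
      ≤ (specNorm B * ‖x‖) ^ 2 := by
    have hk : ∀ i : m, ∑ k, (∑ l, B k l * x (i, l)) ^ 2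
        ≤ specNorm B ^ 2 * ∑ l, (x (i, l)) ^ 2 := by
      intro i
      set xi : EuclideanSpace ℝ p := (WithLp.equiv 2 (p → ℝ)).symm (fun l => x (i, l)) with hxi
      have h1 : ∑ k, (∑ l, B k l * x (i, l)) ^ 2
          = ‖Matrix.toEuclideanCLM (𝕜 := ℝ) B xi‖ ^ 2 := by
        rw [normsq]
        simp [apply_CLM, hxi, Matrix.mulVec, dotProduct]
      have h2 : ‖Matrix.toEuclideanCLM (𝕜 := ℝ) B xi‖ ≤ specNorm B * ‖xi‖ :=
        le_opNorm_mul B xi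
      have h3 : ‖xi‖ ^ 2 = ∑ l, (x (i, l)) ^ 2 := by rw [normsq]; rfl
      calc ∑ k, (∑ l, B k l * x (i, l)) ^ 2
          = ‖Matrix.toEuclideanCLM (𝕜 := ℝ) B xi‖ ^ 2 := h1
        _ ≤ (specNorm B * ‖xi‖) ^ 2 := by
            apply pow_le_pow_left₀ (norm_nonneg _) h2
        _ = specNorm B ^ 2 * ∑ l, (x (i, l)) ^ 2 := by rw [mul_pow, h3]
    calc ‖Matrix.toEuclideanCLM (𝕜 := ℝ) ((1 : Matrix m m ℝ) ⊗ₖ B) x‖ ^ 2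
        = ∑ i, ∑ k, (∑ l, B k l * x (i, l)) ^ 2 := by
          rw [normsq, Fintype.sum_prod_type]
          simp_rw [one_kron_apply]
      _ ≤ ∑ i : m, specNorm B ^ 2 * ∑ l, (x (i, l)) ^ 2 :=
          Finset.sum_le_sum fun i _ => hk i
      _ = (specNorm B * ‖x‖) ^ 2 := by
          rw [← Finset.mul_sum, mul_pow, normsq, Fintype.sum_prod_type]
  simp only [specNorm] at key
  nlinarith [norm_nonneg (Matrix.toEuclideanCLM (𝕜 := ℝ) ((1 : Matrix m m ℝ) ⊗ₖ B) x),
    mul_nonneg (norm_nonneg (Matrix.toEuclideanCLM (𝕜 := ℝ) B)) (norm_nonneg x)]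



lemma exists_good [Nonempty n] (A : Matrix n n ℝ) (hsymm : A.IsSymm)
    (hpos : ∀ i j, 0 ≤ A i j) :
    ∃ y : EuclideanSpace ℝ n, ‖y‖ = 1 ∧
      specNorm A ≤ ∑ i, ∑ j, A i j * y j * y i ∧ ∀ i, 0 ≤ y i := by
  have hA : A.IsHermitian := by
    rwa [Matrix.IsHermitian, Matrix.conjTranspose_eq_transpose_of_trivial]
  set b := hA.eigenvectorBasis with hbdef
  set lam := hA.eigenvalues with hlamdef
  have hb : ∀ i, Matrix.toEuclideanCLM (𝕜 := ℝ) A (b i) = lam i • b i := by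
    intro i
    ext j
    have := congrFun (hA.mulVec_eigenvectorBasis i) j
    simpa [Matrix.mulVec, dotProduct] using this
  obtain ⟨i₀, -, hi₀'⟩ := Finset.exists_max_image Finset.univ (fun i => |lam i|)
    ⟨Classical.arbitrary n, Finset.mem_univ _⟩
  have hi₀ : ∀ i, |lam i| ≤ |lam i₀| := fun i => hi₀' i (Finset.mem_univ i)
  have hparseval : ∀ z : EuclideanSpace ℝ n, ‖z‖ ^ 2 = ∑ i, ⟪b i, z⟫ ^ 2 := by
    intro z
    rw [← real_inner_self_eq_norm_sq, ← b.sum_inner_mul_inner z z]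
    refine Finset.sum_congr rfl fun i _ => ?_
    rw [real_inner_comm z (b i), sq]
  have hib : ∀ (i : n) (x : EuclideanSpace ℝ n),
      ⟪b i, Matrix.toEuclideanCLM (𝕜 := ℝ) A x⟫ = lam i * ⟪b i, x⟫ := by
    intro i x
    calc ⟪b i, Matrix.toEuclideanCLM (𝕜 := ℝ) A x⟫
        = ⟪Matrix.toEuclideanCLM (𝕜 := ℝ) A (b i), x⟫ :=
          ((Matrix.isHermitian_iff_isSymmetric.1 hA) (b i) x).symm
      _ = lam i * ⟪b i, x⟫ := by rw [hb i, real_inner_smul_left]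
  have hnorm : specNorm A ≤ |lam i₀| := by
    apply ContinuousLinearMap.opNorm_le_bound _ (abs_nonneg _)
    intro x
    have h1 : ‖Matrix.toEuclideanCLM (𝕜 := ℝ) A x‖ ^ 2 = ∑ i, (lam i * ⟪b i, x⟫) ^ 2 := by
      rw [hparseval]
      exact Finset.sum_congr rfl fun i _ => by rw [hib]
    have h2 : ∑ i, (lam i * ⟪b i, x⟫) ^ 2 ≤ |lam i₀| ^ 2 * ∑ i, ⟪b i, x⟫ ^ 2 := by
      rw [Finset.mul_sum]
      refine Finset.sum_le_sum fun i _ => ?_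
      rw [mul_pow]
      refine mul_le_mul_of_nonneg_right ?_ (sq_nonneg _)
      calc lam i ^ 2 = |lam i| ^ 2 := (sq_abs _).symm
        _ ≤ |lam i₀| ^ 2 := pow_le_pow_left₀ (abs_nonneg _) (hi₀ i) 2
    have h3 : ‖Matrix.toEuclideanCLM (𝕜 := ℝ) A x‖ ^ 2 ≤ (|lam i₀| * ‖x‖) ^ 2 := by
      rw [h1, mul_pow]
      calc ∑ i, (lam i * ⟪b i, x⟫) ^ 2 ≤ |lam i₀| ^ 2 * ∑ i, ⟪b i, x⟫ ^ 2 := h2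
        _ = |lam i₀| ^ 2 * ‖x‖ ^ 2 := by rw [← hparseval]
    nlinarith [norm_nonneg (Matrix.toEuclideanCLM (𝕜 := ℝ) A x),
      mul_nonneg (abs_nonneg (lam i₀)) (norm_nonneg x)]
  set v : EuclideanSpace ℝ n := b i₀ with hvdef
  have hQv : ∑ i, ∑ j, A i j * v j * v i = lam i₀ := by
    rw [← inner_CLM, hb i₀, real_inner_smul_left]
    have hv1 : ⟪v, v⟫ = 1 := by
      rw [real_inner_self_eq_norm_sq, b.orthonormal.1 i₀]
      norm_num
    rw [hv1, mul_one]
  set y : EuclideanSpace ℝ n := (WithLp.equiv 2 (n → ℝ)).symm (fun i => |v i|) with hydef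
  have hyap : ∀ i, y i = |v i| := fun i => rfl
  have hysq : ‖y‖ ^ 2 = 1 := by
    rw [normsq]
    have : ∀ i, (y i) ^ 2 = (v i) ^ 2 := fun i => by rw [hyap, sq_abs]
    rw [Finset.sum_congr rfl fun i _ => this i, ← normsq, b.orthonormal.1 i₀]
    norm_num
  refine ⟨y, ?_, ?_, fun i => abs_nonneg _⟩
  · nlinarith [norm_nonneg y]
  · have habs : |∑ i, ∑ j, A i j * v j * v i| ≤ ∑ i, ∑ j, A i j * y j * y i := by
      calc |∑ i, ∑ j, A i j * v j * v i| ≤ ∑ i, |∑ j, A i j * v j * v i| :=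
            Finset.abs_sum_le_sum_abs _ _
        _ ≤ ∑ i, ∑ j, |A i j * v j * v i| :=
            Finset.sum_le_sum fun i _ => Finset.abs_sum_le_sum_abs _ _
        _ = ∑ i, ∑ j, A i j * y j * y i := by
            refine Finset.sum_congr rfl fun i _ => Finset.sum_congr rfl fun j _ => ?_
            rw [abs_mul, abs_mul, abs_of_nonneg (hpos i j), hyap, hyap]
    calc specNorm A ≤ |lam i₀| := hnorm
      _ = |∑ i, ∑ j, A i j * v j * v i| := by rw [hQv]
      _ ≤ ∑ i, ∑ j, A i j * y j * y i := habs

end SpecAux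

open SpecAux

theorem specNorm_kronecker_sum {m p : Type*} [Fintype m] [DecidableEq m] [Nonempty m]
    [Fintype p] [DecidableEq p] [Nonempty p] (A : Matrix m m ℝ) (B : Matrix p p ℝ) :
    specNorm (A ⊗ₖ (1 : Matrix p p ℝ) + (1 : Matrix m m ℝ) ⊗ₖ B) ≤ specNorm A + specNorm B ∧
    (A.IsSymm → B.IsSymm → (∀ i j, 0 ≤ A i j) → (∀ i j, 0 ≤ B i j) →
      specNorm (A ⊗ₖ (1 : Matrix p p ℝ) + (1 : Matrix m m ℝ) ⊗ₖ B) = specNorm A + specNorm B) := by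
  set M : Matrix (m × p) (m × p) ℝ := A ⊗ₖ (1 : Matrix p p ℝ) + (1 : Matrix m m ℝ) ⊗ₖ B with hM
  have hupper : specNorm M ≤ specNorm A + specNorm B := by
    have h1 : specNorm M ≤ specNorm (A ⊗ₖ (1 : Matrix p p ℝ))
        + specNorm ((1 : Matrix m m ℝ) ⊗ₖ B) := by
      unfold specNorm
      rw [hM, map_add]
      exact norm_add_le _ _
    exact h1.trans (add_le_add (specNorm_kron_one_le A) (specNorm_one_kron_le B))
  refine ⟨hupper, fun hAs hBs hApos hBpos => ?_⟩
  obtain ⟨y, hy1, hyQ, -⟩ := exists_good A hAs hApos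
  obtain ⟨w, hw1, hwQ, -⟩ := exists_good B hBs hBpos
  set z : EuclideanSpace ℝ (m × p) :=
    (WithLp.equiv 2 ((m × p) → ℝ)).symm (fun ik => y ik.1 * w ik.2) with hzdef
  have hzap : ∀ (i : m) (k : p), z (i, k) = y i * w k := fun _ _ => rfl
  have hysum : ∑ i, (y i) ^ 2 = 1 := by rw [← normsq, hy1]; norm_num
  have hwsum : ∑ k, (w k) ^ 2 = 1 := by rw [← normsq, hw1]; norm_num
  have hz1 : ‖z‖ = 1 := by
    have hzsq : ‖z‖ ^ 2 = 1 := by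
      rw [normsq, Fintype.sum_prod_type]
      calc (∑ i, ∑ k, (z (i, k)) ^ 2) = ∑ i, ∑ k, (y i) ^ 2 * (w k) ^ 2 := by
            refine Finset.sum_congr rfl fun i _ => Finset.sum_congr rfl fun k _ => ?_
            rw [hzap, mul_pow]
        _ = ∑ i, (y i) ^ 2 * ∑ k, (w k) ^ 2 := by
            refine Finset.sum_congr rfl fun i _ => ?_
            rw [Finset.mul_sum]
        _ = 1 := by simp_rw [hwsum, mul_one]; exact hysum
    nlinarith [norm_nonneg z]
  have h1 : ⟪Matrix.toEuclideanCLM (𝕜 := ℝ) (A ⊗ₖ (1 : Matrix p p ℝ)) z, z⟫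
      = (∑ i, ∑ j, A i j * y j * y i) * (∑ k, (w k) ^ 2) := by
    rw [inner_sum', Fintype.sum_prod_type, Finset.sum_mul]
    refine Finset.sum_congr rfl fun i _ => ?_
    simp_rw [kron_one_apply, hzap, Finset.sum_mul, Finset.mul_sum]
    rw [Finset.sum_comm]
    exact Finset.sum_congr rfl fun j _ => Finset.sum_congr rfl fun k _ => by ring
  have h2 : ⟪Matrix.toEuclideanCLM (𝕜 := ℝ) ((1 : Matrix m m ℝ) ⊗ₖ B) z, z⟫
      = (∑ i, (y i) ^ 2) * (∑ k, ∑ l, B k l * w l * w k) := by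
    rw [inner_sum', Fintype.sum_prod_type, Finset.sum_mul]
    refine Finset.sum_congr rfl fun i _ => ?_
    simp_rw [one_kron_apply, hzap, Finset.sum_mul, Finset.mul_sum]
    exact Finset.sum_congr rfl fun k _ => Finset.sum_congr rfl fun l _ => by ring
  have hQ : ⟪Matrix.toEuclideanCLM (𝕜 := ℝ) M z, z⟫
      = (∑ i, ∑ j, A i j * y j * y i) + (∑ k, ∑ l, B k l * w l * w k) := by
    rw [hM, map_add, ContinuousLinearMap.add_apply, inner_add_left, h1, h2,
      hysum, hwsum, mul_one, one_mul]
  have hlower : specNorm A + specNorm B ≤ specNorm M := by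
    calc specNorm A + specNorm B
        ≤ ⟪Matrix.toEuclideanCLM (𝕜 := ℝ) M z, z⟫ := by rw [hQ]; exact add_le_add hyQ hwQ
      _ ≤ ‖Matrix.toEuclideanCLM (𝕜 := ℝ) M z‖ * ‖z‖ := real_inner_le_norm _ _
      _ ≤ (specNorm M * ‖z‖) * ‖z‖ :=
          mul_le_mul_of_nonneg_right (le_opNorm_mul M z) (norm_nonneg z)
      _ = specNorm M := by rw [hz1]; ring
  exact le_antisymm hupper hlower
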